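/- Let ν be a probability measure on [0,1]^2 whose two marginals are both the uniform distribution on [0,1] (a copula measure), and let φ1, φ2 : [0,1] → (0,∞) be nondecreasing, strictly positive functions with 0 < ∫_{[0,1]^2} φ1(u1) φ2(u2) dν < ∞. Define A(x1,x2) = ∫_{[0,x1]×[0,x2]} φ1(u1) φ2(u2) dν(u1,u2), B1(x1) = A(x1,1), and B2(x2) = A(1,x2). If A(x1,x2) = min( B1(x1), B2(x2) ) for all (x1,x2) ∈ [0,1]^2, then ν is the comonotone copula measure, i.e., ν([0,x1]×[0,x2]) = min(x1,x2) for all x1, x2 ∈ [0,1]; equivalently ν is concentrated on the diagonal {(u,u) : u ∈ [0,1]}. -/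

import Mathlib

open MeasureTheory Set

/-- If a nonnegative (in fact positive) function has zero integral on a set, the set is null. -/
lemma meas_zero_of_setIntegral_zero (ν : Measure (ℝ × ℝ)) (f : ℝ × ℝ → ℝ) (S : Set (ℝ × ℝ))
    (hS : MeasurableSet S) (hpos : ∀ p ∈ S, 0 < f p) (hint : IntegrableOn f S ν)
    (h0 : ∫ p in S, f p ∂ν = 0) : ν S = 0 := by
  have hnn : 0 ≤ᵐ[ν.restrict S] f := by
    filter_upwards [ae_restrict_mem hS] with p hp
    exact (hpos p hp).le
  have hz : f =ᵐ[ν.restrict S] 0 := (integral_eq_zero_iff_of_nonneg_ae hnn hint).mp h0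
  have hz' : (ν.restrict S) {p | f p ≠ 0} = 0 := by
    have := hz
    rw [Filter.EventuallyEq, ae_iff] at this
    exact this
  have hsub : S ⊆ {p | f p ≠ 0} := fun p hp => (hpos p hp).ne'
  have : ν ({p | f p ≠ 0} ∩ S) = 0 := by
    rw [← Measure.restrict_apply' hS]; exact hz'
  have h' : ν S ≤ ν ({p | f p ≠ 0} ∩ S) :=
    measure_mono (fun p hp => ⟨hsub hp, hp⟩)
  exact le_antisymm (this ▸ h') zero_le

/-- If a copula measure `ν` (both marginals uniform on `[0,1]`) and nondecreasing strictly
positive weights `φ1, φ2` satisfy `A(x1,x2) = min(B1(x1), B2(x2))` for all `(x1,x2) ∈ [0,1]²`,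
where `A(x1,x2) = ∫_{[0,x1]×[0,x2]} φ1(u1)φ2(u2) dν`, `B1(x1) = A(x1,1)`, `B2(x2) = A(1,x2)`,
then `ν` is the comonotone copula measure: `ν([0,x1]×[0,x2]) = min(x1,x2)`. -/
theorem stmt5 (ν : Measure (ℝ × ℝ)) [IsProbabilityMeasure ν]
    (hmarg1 : ν.map Prod.fst = volume.restrict (Icc (0:ℝ) 1))
    (hmarg2 : ν.map Prod.snd = volume.restrict (Icc (0:ℝ) 1))
    (φ1 φ2 : ℝ → ℝ)
    (hφ1pos : ∀ u ∈ Icc (0:ℝ) 1, 0 < φ1 u) (hφ2pos : ∀ u ∈ Icc (0:ℝ) 1, 0 < φ2 u)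
    (hφ1mono : MonotoneOn φ1 (Icc (0:ℝ) 1)) (hφ2mono : MonotoneOn φ2 (Icc (0:ℝ) 1))
    (hpos : 0 < ∫ p : ℝ × ℝ, φ1 p.1 * φ2 p.2 ∂ν)
    (hint : Integrable (fun p : ℝ × ℝ => φ1 p.1 * φ2 p.2) ν)
    (hmin : ∀ x1 ∈ Icc (0:ℝ) 1, ∀ x2 ∈ Icc (0:ℝ) 1,
      (∫ p in Icc (0:ℝ) x1 ×ˢ Icc (0:ℝ) x2, φ1 p.1 * φ2 p.2 ∂ν)
        = min (∫ p in Icc (0:ℝ) x1 ×ˢ Icc (0:ℝ) 1, φ1 p.1 * φ2 p.2 ∂ν)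
            (∫ p in Icc (0:ℝ) 1 ×ˢ Icc (0:ℝ) x2, φ1 p.1 * φ2 p.2 ∂ν)) :
    ∀ x1 ∈ Icc (0:ℝ) 1, ∀ x2 ∈ Icc (0:ℝ) 1,
      (ν (Icc (0:ℝ) x1 ×ˢ Icc (0:ℝ) x2)).toReal = min x1 x2 := by
  intro x1 hx1 x2 hx2
  obtain ⟨h0x1, hx11⟩ := hx1
  obtain ⟨h0x2, hx21⟩ := hx2
  set f : ℝ × ℝ → ℝ := fun p => φ1 p.1 * φ2 p.2 with hf
  -- null sets from marginals
  have hnullfst : ν (Prod.fst ⁻¹' (Icc (0:ℝ) 1)ᶜ) = 0 := by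
    have h := Measure.map_apply measurable_fst (measurableSet_Icc (a := (0:ℝ)) (b := 1)).compl
      (μ := ν)
    rw [hmarg1] at h
    rw [← h, Measure.restrict_apply measurableSet_Icc.compl, compl_inter_self, measure_empty]
  have hnullsnd : ν (Prod.snd ⁻¹' (Icc (0:ℝ) 1)ᶜ) = 0 := by
    have h := Measure.map_apply measurable_snd (measurableSet_Icc (a := (0:ℝ)) (b := 1)).compl
      (μ := ν)
    rw [hmarg2] at h
    rw [← h, Measure.restrict_apply measurableSet_Icc.compl, compl_inter_self, measure_empty]
  -- marginal rectangle measures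
  have hmarg1' : ∀ a : ℝ, 0 ≤ a → a ≤ 1 → ν (Icc 0 a ×ˢ Icc (0:ℝ) 1) = ENNReal.ofReal a := by
    intro a h0a ha1
    have h1 : ν (Prod.fst ⁻¹' Icc (0:ℝ) a) = ENNReal.ofReal a := by
      have h := Measure.map_apply measurable_fst (measurableSet_Icc (a := (0:ℝ)) (b := a))
        (μ := ν)
      rw [hmarg1] at h
      rw [← h, Measure.restrict_apply measurableSet_Icc,
        Set.Icc_inter_Icc, Real.volume_Icc]
      simp [max_eq_left h0a, min_eq_left ha1]
    have hsub : Icc 0 a ×ˢ Icc (0:ℝ) 1 ⊆ Prod.fst ⁻¹' Icc (0:ℝ) a := fun p hp => hp.1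
    have hdiff : ν ((Prod.fst ⁻¹' Icc (0:ℝ) a) \ (Icc 0 a ×ˢ Icc (0:ℝ) 1)) = 0 := by
      refine measure_mono_null ?_ hnullsnd
      intro p hp
      obtain ⟨hp1, hp2⟩ := hp
      intro hc
      exact hp2 ⟨hp1, hc⟩
    rw [← measure_diff_null hdiff] at h1
    rwa [Set.diff_diff_right_self, Set.inter_eq_right.mpr hsub] at h1
  have hmarg2' : ∀ a : ℝ, 0 ≤ a → a ≤ 1 → ν (Icc (0:ℝ) 1 ×ˢ Icc 0 a) = ENNReal.ofReal a := by
    intro a h0a ha1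
    have h1 : ν (Prod.snd ⁻¹' Icc (0:ℝ) a) = ENNReal.ofReal a := by
      have h := Measure.map_apply measurable_snd (measurableSet_Icc (a := (0:ℝ)) (b := a))
        (μ := ν)
      rw [hmarg2] at h
      rw [← h, Measure.restrict_apply measurableSet_Icc,
        Set.Icc_inter_Icc, Real.volume_Icc]
      simp [max_eq_left h0a, min_eq_left ha1]
    have hsub : Icc (0:ℝ) 1 ×ˢ Icc 0 a ⊆ Prod.snd ⁻¹' Icc (0:ℝ) a := fun p hp => hp.2
    have hdiff : ν ((Prod.snd ⁻¹' Icc (0:ℝ) a) \ (Icc (0:ℝ) 1 ×ˢ Icc 0 a)) = 0 := by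
      refine measure_mono_null ?_ hnullfst
      intro p hp
      obtain ⟨hp1, hp2⟩ := hp
      intro hc
      exact hp2 ⟨hc, hp1⟩
    rw [← measure_diff_null hdiff] at h1
    rwa [Set.diff_diff_right_self, Set.inter_eq_right.mpr hsub] at h1
  -- upper bounds on the rectangle measure
  have hub1 : ν (Icc (0:ℝ) x1 ×ˢ Icc (0:ℝ) x2) ≤ ENNReal.ofReal x1 := by
    rw [← hmarg1' x1 h0x1 hx11]
    exact measure_mono (Set.prod_mono le_rfl (Icc_subset_Icc le_rfl hx21))
  have hub2 : ν (Icc (0:ℝ) x1 ×ˢ Icc (0:ℝ) x2) ≤ ENNReal.ofReal x2 := by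
    rw [← hmarg2' x2 h0x2 hx21]
    exact measure_mono (Set.prod_mono (Icc_subset_Icc le_rfl hx11) le_rfl)
  -- decompositions
  have hdecomp1 : Icc (0:ℝ) x1 ×ˢ Icc (0:ℝ) 1
      = Icc (0:ℝ) x1 ×ˢ Icc (0:ℝ) x2 ∪ Icc (0:ℝ) x1 ×ˢ Ioc x2 1 := by
    rw [← Set.prod_union, Set.Icc_union_Ioc_eq_Icc h0x2 hx21]
  have hdecomp2 : Icc (0:ℝ) 1 ×ˢ Icc (0:ℝ) x2
      = Icc (0:ℝ) x1 ×ˢ Icc (0:ℝ) x2 ∪ Ioc x1 1 ×ˢ Icc (0:ℝ) x2 := by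
    rw [← Set.union_prod, Set.Icc_union_Ioc_eq_Icc h0x1 hx11]
  have hdisj1 : Disjoint (Icc (0:ℝ) x1 ×ˢ Icc (0:ℝ) x2) (Icc (0:ℝ) x1 ×ˢ Ioc x2 1) := by
    rw [Set.disjoint_left]
    rintro p ⟨-, hp2⟩ ⟨-, hq2⟩
    exact absurd hp2.2 (not_le.mpr hq2.1)
  have hdisj2 : Disjoint (Icc (0:ℝ) x1 ×ˢ Icc (0:ℝ) x2) (Ioc x1 1 ×ˢ Icc (0:ℝ) x2) := by
    rw [Set.disjoint_left]
    rintro p ⟨hp1, -⟩ ⟨hq1, -⟩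
    exact absurd hp1.2 (not_le.mpr hq1.1)
  have hmS1 : MeasurableSet (Icc (0:ℝ) x1 ×ˢ Ioc x2 1) :=
    measurableSet_Icc.prod measurableSet_Ioc
  have hmS2 : MeasurableSet (Ioc x1 1 ×ˢ Icc (0:ℝ) x2) :=
    measurableSet_Ioc.prod measurableSet_Icc
  -- the min hypothesis at (x1, x2)
  have hm := hmin x1 ⟨h0x1, hx11⟩ x2 ⟨h0x2, hx21⟩
  rcases le_total (∫ p in Icc (0:ℝ) x1 ×ˢ Icc (0:ℝ) 1, f p ∂ν)
      (∫ p in Icc (0:ℝ) 1 ×ˢ Icc (0:ℝ) x2, f p ∂ν) with hBle | hBle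
  · -- case B1 ≤ B2 : the strip Icc 0 x1 ×ˢ Ioc x2 1 is null
    have hIeq : (∫ p in Icc (0:ℝ) x1 ×ˢ Icc (0:ℝ) x2, f p ∂ν)
        = ∫ p in Icc (0:ℝ) x1 ×ˢ Icc (0:ℝ) 1, f p ∂ν := by
      rw [hm, min_eq_left hBle]
    have hadd : (∫ p in Icc (0:ℝ) x1 ×ˢ Icc (0:ℝ) 1, f p ∂ν)
        = (∫ p in Icc (0:ℝ) x1 ×ˢ Icc (0:ℝ) x2, f p ∂ν)
          + ∫ p in Icc (0:ℝ) x1 ×ˢ Ioc x2 1, f p ∂ν := by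
      rw [hdecomp1]
      exact setIntegral_union hdisj1 hmS1 hint.integrableOn hint.integrableOn
    have hzero : (∫ p in Icc (0:ℝ) x1 ×ˢ Ioc x2 1, f p ∂ν) = 0 := by
      rw [hIeq] at hadd; linarith
    have hnull : ν (Icc (0:ℝ) x1 ×ˢ Ioc x2 1) = 0 := by
      refine meas_zero_of_setIntegral_zero ν f _ hmS1 ?_ hint.integrableOn hzero
      rintro p ⟨hp1, hp2⟩
      exact mul_pos (hφ1pos p.1 ⟨hp1.1, hp1.2.trans hx11⟩)
        (hφ2pos p.2 ⟨h0x2.trans hp2.1.le, hp2.2⟩)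
    have hmeq : ν (Icc (0:ℝ) x1 ×ˢ Icc (0:ℝ) x2) = ENNReal.ofReal x1 := by
      rw [← hmarg1' x1 h0x1 hx11, hdecomp1, measure_union hdisj1 hmS1, hnull, add_zero]
    have hx12 : x1 ≤ x2 := by
      rw [hmeq] at hub2
      exact (ENNReal.ofReal_le_ofReal_iff h0x2).mp hub2
    rw [hmeq, ENNReal.toReal_ofReal h0x1, min_eq_left hx12]
  · -- case B2 ≤ B1 : the strip Ioc x1 1 ×ˢ Icc 0 x2 is null
    have hIeq : (∫ p in Icc (0:ℝ) x1 ×ˢ Icc (0:ℝ) x2, f p ∂ν)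
        = ∫ p in Icc (0:ℝ) 1 ×ˢ Icc (0:ℝ) x2, f p ∂ν := by
      rw [hm, min_eq_right hBle]
    have hadd : (∫ p in Icc (0:ℝ) 1 ×ˢ Icc (0:ℝ) x2, f p ∂ν)
        = (∫ p in Icc (0:ℝ) x1 ×ˢ Icc (0:ℝ) x2, f p ∂ν)
          + ∫ p in Ioc x1 1 ×ˢ Icc (0:ℝ) x2, f p ∂ν := by
      rw [hdecomp2]
      exact setIntegral_union hdisj2 hmS2 hint.integrableOn hint.integrableOn
    have hzero : (∫ p in Ioc x1 1 ×ˢ Icc (0:ℝ) x2, f p ∂ν) = 0 := by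
      rw [hIeq] at hadd; linarith
    have hnull : ν (Ioc x1 1 ×ˢ Icc (0:ℝ) x2) = 0 := by
      refine meas_zero_of_setIntegral_zero ν f _ hmS2 ?_ hint.integrableOn hzero
      rintro p ⟨hp1, hp2⟩
      exact mul_pos (hφ1pos p.1 ⟨h0x1.trans hp1.1.le, hp1.2⟩)
        (hφ2pos p.2 ⟨hp2.1, hp2.2.trans hx21⟩)
    have hmeq : ν (Icc (0:ℝ) x1 ×ˢ Icc (0:ℝ) x2) = ENNReal.ofReal x2 := by
      rw [← hmarg2' x2 h0x2 hx21, hdecomp2, measure_union hdisj2 hmS2, hnull, add_zero]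
    have hx21' : x2 ≤ x1 := by
      rw [hmeq] at hub1
      exact (ENNReal.ofReal_le_ofReal_iff h0x1).mp hub1
    rw [hmeq, ENNReal.toReal_ofReal h0x2, min_eq_right hx21']
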